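/- Let R be a commutative ring over a field k, let F ⊆ Der(R) be a bracket-closed R-submodule, and suppose ρ: A = R^n → F is a surjective R-module map with ρ(e_1),…,ρ(e_n) generating F. Then there exists a k-bilinear, antisymmetric bracket [·,·]_A on A satisfying the Leibniz rule [a, f·b]_A = ρ(a)(f)·b + f·[a,b]_A and such that ρ([a,b]_A) = [ρ(a), ρ(b)] for all a, b ∈ A (i.e., an almost-Lie algebroid structure on the anchored bundle A, possibly without the Jacobi identity). -/
import Mathlib


/-- Every trivial anchored bundle `ρ : Rⁿ → F` over a bracket-closed module of
derivations carries an almost-Lie algebroid bracket: `k`-bilinear, antisymmetric,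
satisfying the Leibniz rule, and intertwining `ρ` with the commutator bracket. -/
theorem stmt15 (k R : Type) [Field k] [CommRing R] [Algebra k R] (n : ℕ)
    (F : Submodule R (Derivation k R R))
    (hF : ∀ X ∈ F, ∀ Y ∈ F, ⁅X, Y⁆ ∈ F)
    (ρ : (Fin n → R) →ₗ[R] Derivation k R R)
    (hρF : ∀ a : Fin n → R, ρ a ∈ F)
    (hsurj : ∀ X ∈ F, ∃ a : Fin n → R, ρ a = X) :
    ∃ Br : (Fin n → R) → (Fin n → R) → (Fin n → R),
      (∀ a b c : Fin n → R, Br (a + b) c = Br a c + Br b c) ∧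
      (∀ (t : k) (a b : Fin n → R), Br (t • a) b = t • Br a b) ∧
      (∀ a b : Fin n → R, Br a b = - Br b a) ∧
      (∀ (a b : Fin n → R) (f : R), Br a (f • b) = (ρ a) f • b + f • Br a b) ∧
      (∀ a b : Fin n → R, ρ (Br a b) = ⁅ρ a, ρ b⁆) := by
  classical
  set E : Fin n → (Fin n → R) := fun i j => if i = j then (1:R) else 0 with hE
  have Dsum : ∀ (D : Fin n → Derivation k R R) (r : R), (∑ i, D i) r = ∑ i, D i r := by
    intro D r
    have := map_sum (Derivation.coeFnAddMonoidHom (R := k) (A := R) (M := R)) D Finset.univ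
    calc (∑ i, D i) r = (Derivation.coeFnAddMonoidHom (∑ i, D i)) r := rfl
    _ = ∑ i, D i r := by rw [this]; simp [Derivation.coeFnAddMonoidHom]
  have rho_apply : ∀ (v : Fin n → R) (r : R), ρ v r = ∑ i, v i * ρ (E i) r := by
    intro v r
    conv_lhs => rw [pi_eq_sum_univ v, map_sum]
    rw [show (∑ i, ρ (v i • fun j => if i = j then (1:R) else 0))
        = ∑ i, ρ (v i • E i) from rfl]
    rw [Dsum]
    exact Finset.sum_congr rfl fun i _ => by
      rw [map_smul]; simp [Derivation.smul_apply, smul_eq_mul]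
  have hlift : ∀ i j : Fin n, ∃ v : Fin n → R, ρ v = ⁅ρ (E i), ρ (E j)⁆ := fun i j =>
    hsurj _ (hF _ (hρF (E i)) _ (hρF (E j)))
  choose d hd using hlift
  set c : Fin n → Fin n → (Fin n → R) := fun i j =>
    if i < j then d i j else if j < i then - d j i else 0 with hc
  have hρc : ∀ i j, ρ (c i j) = ⁅ρ (E i), ρ (E j)⁆ := by
    intro i j
    rcases lt_trichotomy i j with h | h | h
    · simp only [hc, if_pos h]; exact hd i j
    · subst h
      rw [show c i i = 0 by simp [hc], map_zero, lie_self]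
    · rw [show c i j = - d j i by simp [hc, h, not_lt_of_gt h]]
      rw [map_neg, hd]
      exact lie_skew _ _
  have hcskew : ∀ i j, c j i = - c i j := by
    intro i j
    rcases lt_trichotomy i j with h | h | h
    · simp [hc, h, not_lt_of_gt h]
    · subst h; simp [hc]
    · simp [hc, h, not_lt_of_gt h]
  refine ⟨fun a b => (∑ i, ∑ j, (a i * b j) • c i j) + fun x => ρ a (b x) - ρ b (a x),
    ?_, ?_, ?_, ?_, ?_⟩
  · intro a b e
    funext x
    simp only [Pi.add_apply, Finset.sum_apply, Pi.smul_apply, smul_eq_mul, map_add,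
      Derivation.add_apply, add_mul, Finset.sum_add_distrib]
    ring
  · intro t a b
    funext x
    have ha : (t • a : Fin n → R) = (algebraMap k R t) • a := by
      funext y; simp [Algebra.smul_def]
    rw [ha]
    simp only [Pi.smul_apply, Finset.sum_apply, Pi.add_apply, smul_eq_mul, map_smul,
      Derivation.smul_apply, Derivation.leibniz, Derivation.map_algebraMap]
    rw [Algebra.smul_def t]
    rw [show (∑ i, ∑ j, algebraMap k R t * a i * b j * c i j x)
        = algebraMap k R t * ∑ i, ∑ j, a i * b j * c i j x by
      rw [Finset.mul_sum]
      refine Finset.sum_congr rfl fun i _ => ?_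
      rw [Finset.mul_sum]
      exact Finset.sum_congr rfl fun j _ => by ring]
    ring
  · intro a b
    funext x
    simp only [Pi.neg_apply, Pi.add_apply, Finset.sum_apply, Pi.smul_apply, smul_eq_mul]
    rw [show (∑ i, ∑ j, (b i * a j) * c i j x) = - ∑ i, ∑ j, (a i * b j) * c i j x by
      rw [Finset.sum_comm, ← Finset.sum_neg_distrib]
      refine Finset.sum_congr rfl fun i _ => ?_
      rw [← Finset.sum_neg_distrib]
      refine Finset.sum_congr rfl fun j _ => ?_
      rw [hcskew j i]
      simp only [Pi.neg_apply]
      ring]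
    ring
  · intro a b f
    funext x
    simp only [Pi.add_apply, Pi.smul_apply, Finset.sum_apply, smul_eq_mul, map_smul,
      Derivation.smul_apply, Derivation.leibniz]
    rw [show (∑ i, ∑ j, (a i * (f * b j)) * c i j x)
        = f * ∑ i, ∑ j, (a i * b j) * c i j x by
      rw [Finset.mul_sum]
      refine Finset.sum_congr rfl fun i _ => ?_
      rw [Finset.mul_sum]
      exact Finset.sum_congr rfl fun j _ => by ring]
    ring
  · intro a b
    ext r
    beta_reduce
    rw [Derivation.commutator_apply, rho_apply]
    simp only [Pi.add_apply]
    have key : ∀ x : Fin n,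
        (((∑ i, ∑ j, (a i * b j) • c i j) : Fin n → R) x + (ρ a (b x) - ρ b (a x)))
          * ρ (E x) r
        = (∑ i, ∑ j, ((a i * b j) * c i j x) * ρ (E x) r)
            + (ρ a (b x) * ρ (E x) r - ρ b (a x) * ρ (E x) r) := by
      intro x
      simp only [Finset.sum_apply, Pi.smul_apply, smul_eq_mul, add_mul, sub_mul,
        Finset.sum_mul]
    rw [Finset.sum_congr rfl fun x _ => key x]
    rw [Finset.sum_add_distrib, Finset.sum_sub_distrib]
    have dbl : (∑ x, ∑ i, ∑ j, ((a i * b j) * c i j x) * ρ (E x) r)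
        = ∑ i, ∑ j, (a i * b j) * (ρ (E i) (ρ (E j) r) - ρ (E j) (ρ (E i) r)) := by
      rw [Finset.sum_comm]
      refine Finset.sum_congr rfl fun i _ => ?_
      rw [Finset.sum_comm]
      refine Finset.sum_congr rfl fun j _ => ?_
      have h1 : (∑ x, ((a i * b j) * c i j x) * ρ (E x) r)
          = (a i * b j) * ∑ x, c i j x * ρ (E x) r := by
        rw [Finset.mul_sum]
        exact Finset.sum_congr rfl fun x _ => by ring
      rw [h1, ← rho_apply, hρc, Derivation.commutator_apply]
    rw [dbl]
    -- now expand the RHS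
    have hb : ρ a (ρ b r) = ∑ j, (b j * ρ a (ρ (E j) r) + ρ (E j) r * ρ a (b j)) := by
      rw [rho_apply b r, map_sum]
      exact Finset.sum_congr rfl fun j _ => by
        rw [Derivation.leibniz]; simp [smul_eq_mul]
    have ha : ρ b (ρ a r) = ∑ i, (a i * ρ b (ρ (E i) r) + ρ (E i) r * ρ b (a i)) := by
      rw [rho_apply a r, map_sum]
      exact Finset.sum_congr rfl fun i _ => by
        rw [Derivation.leibniz]; simp [smul_eq_mul]
    rw [hb, ha]
    have hb2 : ∀ j, ρ a (ρ (E j) r) = ∑ i, a i * ρ (E i) (ρ (E j) r) :=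
      fun j => rho_apply a _
    have ha2 : ∀ i, ρ b (ρ (E i) r) = ∑ j, b j * ρ (E j) (ρ (E i) r) :=
      fun i => rho_apply b _
    simp only [fun j => hb2 j, fun i => ha2 i]
    simp only [Finset.mul_sum, Finset.sum_add_distrib, mul_sub, Finset.sum_sub_distrib]
    rw [Finset.sum_comm (f := fun i j => a i * (b j * ρ (E j) (ρ (E i) r)))]
    rw [show (∑ j, ∑ i, b j * (a i * ρ (E i) (ρ (E j) r)))
        = ∑ i, ∑ j, a i * b j * ρ (E i) (ρ (E j) r) by
      rw [Finset.sum_comm]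
      exact Finset.sum_congr rfl fun i _ =>
        Finset.sum_congr rfl fun j _ => by ring]
    rw [show (∑ j, ∑ i, a i * (b j * ρ (E j) (ρ (E i) r)))
        = ∑ i, ∑ j, a i * b j * ρ (E j) (ρ (E i) r) by
      rw [Finset.sum_comm]
      exact Finset.sum_congr rfl fun i _ =>
        Finset.sum_congr rfl fun j _ => by ring]
    rw [show (∑ x, ρ a (b x) * ρ (E x) r) = ∑ j, ρ (E j) r * ρ a (b j) from
      Finset.sum_congr rfl fun x _ => by ring]
    rw [show (∑ x, ρ b (a x) * ρ (E x) r) = ∑ i, ρ (E i) r * ρ b (a i) from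
      Finset.sum_congr rfl fun x _ => by ring]
    ring
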